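/- Let F be a field and let I be an infinite set. Then for every derivation d of the algebra M_∞(I,F) there exists a matrix y ∈ M_rcf(I,F) such that d(a) = ya − ay for all a ∈ M_∞(I,F). -/

import Mathlib

/-- The product of two `I × I` matrices, defined via `finsum`; it is well defined
whenever one factor is finitary or both are row-and-column-finite. -/
noncomputable def matMul {F I : Type*} [Field F] (a b : Matrix I I F) : Matrix I I F :=
  fun i j => ∑ᶠ k, a i k * b k j

/-- A finitary matrix: only finitely many nonzero entries. -/
def IsFinitary {F I : Type*} [Field F] (a : Matrix I I F) : Prop :=
  {p : I × I | a p.1 p.2 ≠ 0}.Finite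

/-- A matrix has finitely many nonzero entries in each row and in each column. -/
def IsRcf {F I : Type*} [Field F] (a : Matrix I I F) : Prop :=
  (∀ i, {j | a i j ≠ 0}.Finite) ∧ (∀ j, {i | a i j ≠ 0}.Finite)

section Aux
open scoped Classical
variable {F I : Type*} [Field F]

/-- matrix unit -/
noncomputable def Efin (k l : I) : Matrix I I F := fun i j => if k = i ∧ l = j then 1 else 0

lemma Efin_finitary (k l : I) : IsFinitary (Efin k l : Matrix I I F) := by
  apply Set.Finite.subset (Set.finite_singleton (k, l))
  intro p hp
  simp only [Set.mem_setOf_eq, Efin, ne_eq, ite_eq_right_iff, not_forall] at hp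
  obtain ⟨⟨h1, h2⟩, _⟩ := hp
  simp [Prod.ext_iff, h1.symm, h2.symm]

lemma row_finite {a : Matrix I I F} (h : IsFinitary a) (i : I) :
    {m | a i m ≠ 0}.Finite := by
  have : {m | a i m ≠ 0} = (fun m => ((i, m) : I × I)) ⁻¹' {p | a p.1 p.2 ≠ 0} := rfl
  rw [this]
  exact Set.Finite.preimage (fun x _ y _ h => congrArg Prod.snd h) h

lemma col_finite {a : Matrix I I F} (h : IsFinitary a) (j : I) :
    {m | a m j ≠ 0}.Finite := by
  have : {m | a m j ≠ 0} = (fun m => ((m, j) : I × I)) ⁻¹' {p | a p.1 p.2 ≠ 0} := rfl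
  rw [this]
  exact Set.Finite.preimage (fun x _ y _ h => congrArg Prod.fst h) h

lemma matMul_Efin_right (a : Matrix I I F) (k l i j : I) :
    matMul a (Efin k l) i j = if l = j then a i k else 0 := by
  unfold matMul
  rw [finsum_eq_single _ k]
  · by_cases h : l = j <;> simp [Efin, h]
  · intro m hm; simp [Efin, (Ne.symm hm)]

lemma matMul_Efin_left (b : Matrix I I F) (k l i j : I) :
    matMul (Efin k l) b i j = if k = i then b l j else 0 := by
  unfold matMul
  rw [finsum_eq_single _ l]
  · by_cases h : k = i <;> simp [Efin, h]
  · intro m hm; simp [Efin, (Ne.symm hm)]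

lemma Efin_mul_Efin (k l p q : I) :
    matMul (Efin k l) (Efin p q) = if l = p then (Efin k q : Matrix I I F) else 0 := by
  funext i j
  rw [matMul_Efin_left]
  by_cases h1 : l = p <;> by_cases h2 : k = i <;> simp [Efin, h1, h2, and_comm] <;>
    exact fun hpl _ => h1 hpl.symm

lemma matMul_zero_right (a : Matrix I I F) : matMul a 0 = 0 := by
  funext i j; simp [matMul]

lemma matMul_zero_left (a : Matrix I I F) : matMul 0 a = 0 := by
  funext i j; simp [matMul]

lemma matMul_add_right (y a b : Matrix I I F) (ha : IsFinitary a) (hb : IsFinitary b) :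
    matMul y (a + b) = matMul y a + matMul y b := by
  funext i j
  show ∑ᶠ m, y i m * (a m j + b m j) = (∑ᶠ m, y i m * a m j) + ∑ᶠ m, y i m * b m j
  simp only [mul_add]
  apply finsum_add_distrib
  · exact (col_finite ha j).subset (fun m hm => by
      simp only [Function.mem_support] at hm
      intro h0; apply hm; simp [h0])
  · exact (col_finite hb j).subset (fun m hm => by
      simp only [Function.mem_support] at hm
      intro h0; apply hm; simp [h0])

lemma matMul_add_left (y a b : Matrix I I F) (ha : IsFinitary a) (hb : IsFinitary b) :
    matMul (a + b) y = matMul a y + matMul b y := by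
  funext i j
  show ∑ᶠ m, (a i m + b i m) * y m j = (∑ᶠ m, a i m * y m j) + ∑ᶠ m, b i m * y m j
  simp only [add_mul]
  apply finsum_add_distrib
  · exact (row_finite ha i).subset (fun m hm => by
      simp only [Function.mem_support] at hm
      intro h0; apply hm; simp [h0])
  · exact (row_finite hb i).subset (fun m hm => by
      simp only [Function.mem_support] at hm
      intro h0; apply hm; simp [h0])

lemma matMul_smul_right (y a : Matrix I I F) (c : F) (ha : IsFinitary a) :
    matMul y (c • a) = c • matMul y a := by
  funext i j
  show ∑ᶠ m, y i m * (c * a m j) = c * ∑ᶠ m, y i m * a m j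
  rw [mul_finsum _ c]
  simp only [mul_left_comm]

lemma matMul_smul_left (y a : Matrix I I F) (c : F) (ha : IsFinitary a) :
    matMul (c • a) y = c • matMul a y := by
  funext i j
  show ∑ᶠ m, (c * a i m) * y m j = c * ∑ᶠ m, a i m * y m j
  rw [mul_finsum _ c]
  simp only [mul_assoc]

lemma finitary_add {a b : Matrix I I F} (ha : IsFinitary a) (hb : IsFinitary b) :
    IsFinitary (a + b) :=
  (ha.union hb).subset (fun p hp => by
    by_contra h
    simp only [Set.mem_union, Set.mem_setOf_eq, not_or, not_not] at h
    exact hp (by show a p.1 p.2 + b p.1 p.2 = 0; rw [h.1, h.2, add_zero]))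

lemma finitary_smul {a : Matrix I I F} (c : F) (ha : IsFinitary a) :
    IsFinitary (c • a) :=
  ha.subset (fun p hp => by
    simp only [Set.mem_setOf_eq, Matrix.smul_apply, smul_eq_mul] at hp ⊢
    intro h0; apply hp; rw [h0, mul_zero])

end Aux

lemma finitary_zero {F I : Type*} [Field F] : IsFinitary (0 : Matrix I I F) :=
  Set.finite_empty.subset (fun _ hp => (hp rfl).elim)


/-- Every derivation `d` of the associative algebra `M_∞(I,F)` of finitary
matrices is of the form `d(a) = y*a - a*y` for some `y ∈ M_rcf(I,F)`. -/
theorem stmt_4 (F I : Type*) [Field F] [Infinite I]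
    (d : Matrix I I F → Matrix I I F)
    (hmap : ∀ a, IsFinitary a → IsFinitary (d a))
    (hadd : ∀ a b, IsFinitary a → IsFinitary b → d (a + b) = d a + d b)
    (hsmul : ∀ (c : F) (a), IsFinitary a → d (c • a) = c • d a)
    (hmul : ∀ a b, IsFinitary a → IsFinitary b →
      d (matMul a b) = matMul (d a) b + matMul a (d b)) :
    ∃ y : Matrix I I F, IsRcf y ∧
      ∀ a, IsFinitary a → d a = matMul y a - matMul a y := by
  classical
  obtain ⟨i0⟩ := (inferInstance : Nonempty I)
  set y : Matrix I I F := fun i j => d (Efin j i0) i i0 with hy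
  have finE : ∀ k l : I, IsFinitary (Efin k l : Matrix I I F) := Efin_finitary
  have hd0 : d 0 = 0 := by
    have h := hsmul 0 0 finitary_zero
    simpa using h
  have hc : d (Efin i0 i0) i0 i0 = 0 := by
    have h := hmul (Efin i0 i0) (Efin i0 i0) (finE _ _) (finE _ _)
    rw [Efin_mul_Efin, if_pos rfl] at h
    have h2 := congrFun (congrFun h i0) i0
    rw [Matrix.add_apply, matMul_Efin_right, matMul_Efin_left, if_pos rfl] at h2
    exact left_eq_add.mp h2
  have hB : ∀ l j : I, d (Efin i0 l) i0 j = - d (Efin j i0) l i0 := by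
    intro l j
    have h := hmul (Efin i0 l) (Efin j i0) (finE _ _) (finE _ _)
    rw [Efin_mul_Efin] at h
    have hl : d (if l = j then (Efin i0 i0 : Matrix I I F) else 0) i0 i0 = 0 := by
      by_cases hlj : l = j
      · rw [if_pos hlj]; exact hc
      · rw [if_neg hlj, hd0]; rfl
    have h2 := congrFun (congrFun h i0) i0
    rw [Matrix.add_apply, matMul_Efin_right, matMul_Efin_left, if_pos rfl, if_pos rfl, hl] at h2
    exact eq_neg_of_add_eq_zero_left h2.symm
  have key : ∀ k l i j : I, d (Efin k l) i j
      = (if l = j then y i k else 0) - (if k = i then y l j else 0) := by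
    intro k l i j
    have h := hmul (Efin k i0) (Efin i0 l) (finE _ _) (finE _ _)
    rw [Efin_mul_Efin, if_pos rfl] at h
    have h2 := congrFun (congrFun h i) j
    rw [Matrix.add_apply, matMul_Efin_right, matMul_Efin_left] at h2
    rw [h2, hB l j, hy]
    by_cases h1 : l = j <;> by_cases h2' : k = i <;> simp [h1, h2'] <;> ring
  have comm : ∀ k l : I, d (Efin k l) = matMul y (Efin k l) - matMul (Efin k l) y := by
    intro k l; funext i j
    rw [Matrix.sub_apply, matMul_Efin_right, matMul_Efin_left, key]
  have hrow : ∀ i, {j | y i j ≠ 0}.Finite := by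
    intro i
    have hfin := hmap (Efin i i) (finE _ _)
    have hsub : {j | y i j ≠ 0} ⊆ insert i {j | d (Efin i i) i j ≠ 0} := by
      intro j hj
      by_cases hij : j = i
      · simp [hij]
      · refine Set.mem_insert_iff.mpr (Or.inr ?_)
        simp only [Set.mem_setOf_eq]
        rw [key, if_neg (fun h => hij h.symm), if_pos rfl, zero_sub, neg_ne_zero]
        exact hj
    exact ((row_finite hfin i).insert i).subset hsub
  have hcol : ∀ j, {i | y i j ≠ 0}.Finite := by
    intro j
    have hfin := hmap (Efin j j) (finE _ _)
    have hsub : {i | y i j ≠ 0} ⊆ insert j {i | d (Efin j j) i j ≠ 0} := by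
      intro i hi
      by_cases hij : i = j
      · simp [hij]
      · refine Set.mem_insert_iff.mpr (Or.inr ?_)
        simp only [Set.mem_setOf_eq]
        rw [key, if_pos rfl, if_neg (fun h => hij h.symm)]
        simpa using hi
    exact ((col_finite hfin j).insert j).subset hsub
  have main : ∀ s : Finset (I × I), ∀ g : I × I → F,
      IsFinitary (∑ p ∈ s, g p • Efin p.1 p.2 : Matrix I I F) ∧
      d (∑ p ∈ s, g p • Efin p.1 p.2) =
        matMul y (∑ p ∈ s, g p • Efin p.1 p.2)
          - matMul (∑ p ∈ s, g p • Efin p.1 p.2) y := by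
    intro s
    induction s using Finset.induction_on with
    | empty =>
      intro g
      simp only [Finset.sum_empty]
      exact ⟨finitary_zero, by
        rw [hd0, matMul_zero_left, matMul_zero_right, sub_zero]⟩
    | @insert p s hp ih =>
      intro g
      rw [Finset.sum_insert hp]
      have hfin1 : IsFinitary (g p • Efin p.1 p.2 : Matrix I I F) :=
        finitary_smul _ (finE _ _)
      have hfin2 := (ih g).1
      refine ⟨finitary_add hfin1 hfin2, ?_⟩
      rw [hadd _ _ hfin1 hfin2, hsmul _ _ (finE _ _), (ih g).2, comm,
          matMul_add_right y _ _ hfin1 hfin2, matMul_add_left y _ _ hfin1 hfin2,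
          matMul_smul_right y _ _ (finE _ _), matMul_smul_left y _ _ (finE _ _)]
      module
  refine ⟨y, ⟨hrow, hcol⟩, ?_⟩
  intro a ha
  have hdecomp : a = ∑ p ∈ ha.toFinset, a p.1 p.2 • Efin p.1 p.2 := by
    funext i j
    have hterm : ∀ p : I × I, (a p.1 p.2 • (Efin p.1 p.2 : Matrix I I F)) i j
        = if p = (i, j) then a p.1 p.2 else 0 := by
      intro p
      by_cases h : p = (i, j)
      · subst h; simp [Efin]
      · rw [if_neg h]
        have hne : ¬(p.1 = i ∧ p.2 = j) := fun hh => h (Prod.ext hh.1 hh.2)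
        simp [Efin, hne]
    have hsum : (∑ p ∈ ha.toFinset, a p.1 p.2 • (Efin p.1 p.2 : Matrix I I F)) i j
        = if (i, j) ∈ ha.toFinset then a i j else 0 := by
      rw [Matrix.sum_apply]
      simp_rw [hterm]
      exact Finset.sum_ite_eq' ha.toFinset (i, j) (fun p => a p.1 p.2)
    rw [hsum]
    by_cases hmem : (i, j) ∈ ha.toFinset
    · rw [if_pos hmem]
    · rw [if_neg hmem]
      by_contra hne
      exact hmem (ha.mem_toFinset.mpr hne)
  have h2 := (main ha.toFinset (fun p => a p.1 p.2)).2
  rw [← hdecomp] at h2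
  exact h2
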